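/- Let (X, 𝒜, μ) be a σ-finite measure space, let k : X → ℝ be measurable, let m ≤ M be real numbers with m ≤ k(x) ≤ M for μ-a.e. x ∈ X, and let g : X → ℝ be μ-integrable. Then ∫_X k(x) g(x) dμ(x) = m ∫_X g(x) dμ(x) + ∫_m^M ( ∫_{{x ∈ X : k(x) > y}} g(x) dμ(x) ) dy, where the outer integral on the right is the Lebesgue integral over the interval [m, M]. -/

import Mathlib

open MeasureTheory

/-- Layer-cake identity (C1): for a measurable weight `k` with `m ≤ k ≤ M` a.e.
and an integrable `g`,
`∫ k g dμ = m ∫ g dμ + ∫_{m}^{M} (∫_{{k > y}} g dμ) dy`. -/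
theorem layer_cake_superlevel
    {X : Type*} [MeasurableSpace X] (μ : Measure X) [SigmaFinite μ]
    (k : X → ℝ) (hk : Measurable k)
    (m M : ℝ) (hmM : m ≤ M)
    (hbd : ∀ᵐ x ∂μ, m ≤ k x ∧ k x ≤ M)
    (g : X → ℝ) (hg : Integrable g μ) :
    ∫ x, k x * g x ∂μ
      = m * ∫ x, g x ∂μ
        + ∫ y in m..M, (∫ x in {x | k x > y}, g x ∂μ) := by
  set ν : Measure ℝ := volume.restrict (Set.Ioc m M) with hν
  haveI : IsFiniteMeasure ν := by
    constructor
    rw [hν, Measure.restrict_apply_univ, Real.volume_Ioc]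
    exact ENNReal.ofReal_lt_top
  set s : Set (X × ℝ) := {p : X × ℝ | p.2 < k p.1} with hs
  have hsm : MeasurableSet s := measurableSet_lt measurable_snd (hk.comp measurable_fst)
  set F : X × ℝ → ℝ := s.indicator (fun p => g p.1) with hF
  -- integrability of F on the product
  have hFmeas : AEStronglyMeasurable F (μ.prod ν) := (hg.1.comp_fst).indicator hsm
  have hG : Integrable (fun p : X × ℝ => g p.1) (μ.prod ν) := by
    simpa using hg.mul_prod (integrable_const (1 : ℝ))
  have hFint : Integrable F (μ.prod ν) := by
    refine hG.norm.mono' hFmeas (Filter.Eventually.of_forall fun p => ?_)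
    simpa using norm_indicator_le_norm_self (fun p : X × ℝ => g p.1) p
  have key : ∫ x, (∫ y, F (x, y) ∂ν) ∂μ = ∫ y, (∫ x, F (x, y) ∂μ) ∂ν :=
    integral_integral_swap hFint
  -- compute the inner integral in y
  have hinner : ∀ᵐ x ∂μ, (∫ y, F (x, y) ∂ν) = (k x - m) * g x := by
    filter_upwards [hbd] with x hx
    have hFx : (fun y => F (x, y)) = (Set.Iio (k x)).indicator (fun _ => g x) := by
      funext y
      by_cases h : y < k x
      · simp [hF, hs, Set.indicator_of_mem, h, Set.mem_Iio.mpr h]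
      · simp [hF, hs, Set.indicator_of_notMem, h]
    have hset : Set.Ioc m M ∩ Set.Iio (k x) = Set.Ioo m (k x) := by
      ext y
      simp only [Set.mem_inter_iff, Set.mem_Ioc, Set.mem_Iio, Set.mem_Ioo]
      exact ⟨fun ⟨⟨h1, _⟩, h3⟩ => ⟨h1, h3⟩, fun ⟨h1, h3⟩ => ⟨⟨h1, h3.le.trans hx.2⟩, h3⟩⟩
    rw [hFx, hν, integral_indicator measurableSet_Iio,
      Measure.restrict_restrict measurableSet_Iio, Set.inter_comm, hset,
      setIntegral_const, Real.volume_real_Ioo_of_le (by linarith [hx.1]), smul_eq_mul]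
  -- integrability of k * g
  have hkg : Integrable (fun x => k x * g x) μ := by
    refine (hg.norm.const_mul (max |m| |M|)).mono'
      (hk.aestronglyMeasurable.mul hg.1) ?_
    filter_upwards [hbd] with x hx
    have habs : |k x| ≤ max |m| |M| := by
      rw [abs_le]
      constructor
      · calc -(max |m| |M|) ≤ -|m| := by simp [le_max_left]
          _ ≤ m := neg_abs_le m
          _ ≤ k x := hx.1
      · exact hx.2.trans ((le_abs_self M).trans (le_max_right _ _))
    calc ‖k x * g x‖ = |k x| * ‖g x‖ := by rw [norm_mul]; rfl
      _ ≤ max |m| |M| * ‖g x‖ := mul_le_mul_of_nonneg_right habs (norm_nonneg _)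
  have h1 : ∫ x, (∫ y, F (x, y) ∂ν) ∂μ
      = ∫ x, k x * g x ∂μ - m * ∫ x, g x ∂μ := by
    rw [integral_congr_ae hinner]
    simp_rw [sub_mul]
    rw [integral_sub hkg (hg.const_mul m), integral_const_mul]
  have h2 : ∫ y, (∫ x, F (x, y) ∂μ) ∂ν
      = ∫ y in m..M, (∫ x in {x | k x > y}, g x ∂μ) := by
    rw [intervalIntegral.integral_of_le hmM]
    refine integral_congr_ae (Filter.Eventually.of_forall fun y => ?_)
    show (∫ x, F (x, y) ∂μ) = _
    have : (fun x => F (x, y)) = Set.indicator {x | k x > y} g := by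
      funext x
      by_cases h : y < k x
      · simp [hF, hs, Set.indicator_of_mem, h]
      · simp [hF, hs, Set.indicator_of_notMem, h]
    rw [this, integral_indicator (measurableSet_lt measurable_const hk)]
  have := h1.symm.trans (key.trans h2)
  linarith
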